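/- Let n ≥ 1, let 0 < α < π/4 and σ ∈ (0, π/2 − 2α), let λ ∈ ℂ with |λ| < sin α, let t ∈ [0,1], and let c ≥ 0 satisfy 4(n+1)²c ≤ sin(σ/2). Let E be an (n+1)×(n+1) complex matrix all of whose entries have modulus at most c, and let M = diag{(1+λt)^{−2}, 1, …, 1} + E. Set δ = min{ 1/4 − (n+1)²c , (12 + (n+1)²c)^{−1} } > 0 and φ = 2α + σ < π/2. Then for every ξ ∈ ℂ^{n+1} one has δ|ξ|² ≤ |⟨Mξ, ξ⟩| ≤ δ^{−1}|ξ|², and if ξ ≠ 0 then |arg⟨Mξ, ξ⟩| ≤ φ. (Pointwise sectorial estimate (4.4) on the numerical range of the inverse scaled metric matrix 𝖾_{λ,r}^{−1}; the core of Lemma 4.1.) -/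

import Mathlib

open Complex Finset

noncomputable section

private lemma sqle {x y : ℝ} (hy : 0 ≤ y) (h : x ^ 2 ≤ y ^ 2) : x ≤ y :=
  le_of_pow_le_pow_left₀ two_ne_zero hy h

/-- Disk geometry: if `q` lies in the disk of radius `k|z|` around `z`, then the angle
between `q` and `z` is at most `arcsin k`, expressed via `q * conj z`. -/
private lemma disk_bounds (q z : ℂ) (k ch : ℝ) (hk0 : 0 ≤ k) (hch : 0 ≤ ch)
    (hkc : k ^ 2 + ch ^ 2 = 1)
    (hq : ‖(q - z)‖ ≤ k * ‖z‖) :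
    |(q * (starRingEnd ℂ) z).im| ≤ k * (‖q‖ * ‖z‖) ∧
      ch * (‖q‖ * ‖z‖) ≤ (q * (starRingEnd ℂ) z).re := by
  have hk1 : k ≤ 1 := by nlinarith [sq_nonneg ch]
  set P := (q * (starRingEnd ℂ) z).re with hP
  set Y := (q * (starRingEnd ℂ) z).im with hY
  set S := Complex.normSq z with hS
  clear_value P Y S
  have hS0 : 0 ≤ S := by rw [hS]; exact Complex.normSq_nonneg z
  have hA : (‖q‖ * ‖z‖) ^ 2 = Complex.normSq q * S := by
    rw [mul_pow, Complex.sq_norm, Complex.sq_norm, hS]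
  have hA0 : 0 ≤ ‖q‖ * ‖z‖ :=
    mul_nonneg (norm_nonneg _) (norm_nonneg _)
  have e1 : P ^ 2 + Y ^ 2 = Complex.normSq q * S := by
    simp only [hP, hY, hS, Complex.normSq_apply, Complex.mul_re, Complex.mul_im,
      Complex.conj_re, Complex.conj_im]
    ring
  have e2 : Complex.normSq (q - z) = Complex.normSq q - 2 * P + S := by
    simp only [hP, hS, Complex.normSq_apply, Complex.sub_re, Complex.sub_im,
      Complex.mul_re, Complex.mul_im, Complex.conj_re, Complex.conj_im]
    ring
  have hsub : Complex.normSq (q - z) ≤ k ^ 2 * S := by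
    have h1 : ‖(q - z)‖ ^ 2 ≤ (k * ‖z‖) ^ 2 :=
      pow_le_pow_left₀ (norm_nonneg _) hq 2
    rw [Complex.sq_norm] at h1
    calc Complex.normSq (q - z) ≤ (k * ‖z‖) ^ 2 := h1
      _ = k ^ 2 * S := by rw [mul_pow, Complex.sq_norm, hS]
  have hcon : (P - S) ^ 2 + Y ^ 2 ≤ k ^ 2 * S ^ 2 := by
    have := mul_le_mul_of_nonneg_right hsub hS0
    nlinarith [e1, e2]
  have key : ch ^ 2 * Y ^ 2 ≤ k ^ 2 * P ^ 2 := by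
    nlinarith [sq_nonneg (P - (1 - k ^ 2) * S),
      mul_nonneg (by nlinarith [sq_nonneg ch] : (0:ℝ) ≤ 1 - k ^ 2)
        (sub_nonneg.mpr hcon)]
  have hY2 : Y ^ 2 ≤ (k * (‖q‖ * ‖z‖)) ^ 2 := by
    have : Y ^ 2 = k ^ 2 * Y ^ 2 + ch ^ 2 * Y ^ 2 := by nlinarith []
    nlinarith [e1, hA]
  constructor
  · have := sqle (mul_nonneg hk0 hA0) (by rw [_root_.sq_abs]; exact hY2 : |Y| ^ 2 ≤ (k * (‖q‖ * ‖z‖)) ^ 2)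
    exact this
  · have hP0 : 0 ≤ P := by
      have hPe : P = S + ((q - z) * (starRingEnd ℂ) z).re := by
        simp only [hP, hS, Complex.normSq_apply, Complex.sub_re, Complex.sub_im,
          Complex.mul_re, Complex.mul_im, Complex.conj_re, Complex.conj_im]
        ring
      have h1 : |((q - z) * (starRingEnd ℂ) z).re| ≤ ‖((q - z) * (starRingEnd ℂ) z)‖ :=
        Complex.abs_re_le_norm _
      have h2 : ‖((q - z) * (starRingEnd ℂ) z)‖ ≤ k * S := by
        rw [norm_mul, Complex.norm_conj]
        calc ‖(q - z)‖ * ‖z‖ ≤ (k * ‖z‖) * ‖z‖ :=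
              mul_le_mul_of_nonneg_right hq (norm_nonneg _)
          _ = k * S := by
              have h3 : ‖z‖ * ‖z‖ = S := by
                rw [hS, ← Complex.sq_norm]; ring
              rw [mul_assoc, h3]
      have := abs_le.mp (h1.trans h2)
      nlinarith [mul_le_mul_of_nonneg_right hk1 hS0]
    have hP2 : (ch * (‖q‖ * ‖z‖)) ^ 2 ≤ P ^ 2 := by
      have h4 : (ch * (‖q‖ * ‖z‖)) ^ 2 = ch ^ 2 * (P ^ 2 + Y ^ 2) := by
        rw [mul_pow, hA, ← e1]
      rw [h4]
      clear hq hS hY hP hA e1 e2 hsub hcon hY2 h4 hA0 hS0 hP0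
      nlinarith [key, sq_nonneg P]
    exact sqle hP0 hP2


private lemma aux_rt2 : Real.sqrt 2 < 1.415 := by
  nlinarith [Real.sq_sqrt (by norm_num : (0:ℝ) ≤ 2), Real.sqrt_nonneg 2]

private lemma aux_sahalf {sa rt : ℝ} (h0 : 0 < sa) (h : sa < rt / 2) (hrt : rt ^ 2 = 2) :
    sa ^ 2 < 1 / 2 := by nlinarith

private lemma aux_combine {P Y zr zi cQ cz c2 ch s2 k : ℝ}
    (h1 : (ch * (cQ * cz)) * (c2 * cz) ≤ P * zr)
    (h2 : Y * zi ≤ (k * (cQ * cz)) * (s2 * cz)) :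
    (c2 * ch - s2 * k) * cQ * cz ^ 2 ≤ P * zr - Y * zi := by nlinarith [h1, h2]

private lemma aux_lt1 {k ch : ℝ} (h : k ^ 2 + ch ^ 2 = 1) (hch : 0 < ch) (hk : 0 ≤ k) :
    k < 1 := by nlinarith

private lemma aux_Nub {r i sa : ℝ} (hcon : (r - 1) ^ 2 + i ^ 2 ≤ sa ^ 2)
    (hre : r - 1 ≤ sa) (hsa : sa < 0.708) (hsa0 : 0 < sa) : r ^ 2 + i ^ 2 < 3 := by
  nlinarith

private lemma aux_Nlb {r i sa : ℝ} (hre : 1 - sa ≤ r) (hsa : sa < 0.708) (hsa0 : 0 < sa) :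
    1 / 12 < r ^ 2 + i ^ 2 := by nlinarith [sq_nonneg i]

private lemma aux_sector {xx y sa : ℝ} (h : (xx - 1) ^ 2 + y ^ 2 ≤ sa ^ 2)
    (hsa : sa ^ 2 < 1 / 2) :
    (1 - 2 * sa ^ 2) * (xx ^ 2 + y ^ 2) ≤ xx ^ 2 - y ^ 2 := by
  nlinarith [sq_nonneg (xx - (1 - sa ^ 2))]

private lemma aux_wim {r i A c2 s2 : ℝ} (h1 : c2 * A ≤ r) (hc2 : 0 ≤ c2) (hA : 0 ≤ A)
    (h2 : A ^ 2 = r ^ 2 + i ^ 2) (h3 : s2 ^ 2 + c2 ^ 2 = 1) : i ^ 2 ≤ (s2 * A) ^ 2 := by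
  nlinarith [mul_self_le_mul_self (mul_nonneg hc2 hA) h1]

private lemma aux_eps {m c s : ℝ} (hm : 1 ≤ m) (hc : 0 ≤ c) (hs : 0 ≤ s) :
    c * (m * s) ≤ m ^ 2 * c * s := by
  nlinarith [mul_nonneg (mul_nonneg (mul_nonneg (sub_nonneg.mpr hm)
    (by linarith : (0:ℝ) ≤ m)) hc) hs]

private lemma aux_zlb {r i A a b : ℝ} (hA : A ^ 2 = r ^ 2 + i ^ 2) (hA3 : 1 / 3 < A)
    (hr : 0 ≤ r) (ha : 0 ≤ a) (hb : 0 ≤ b) :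
    ((a + b) / 4) ^ 2 ≤ (r * a + b) ^ 2 + (i * a) ^ 2 := by
  have h9 : 1 / 9 < A ^ 2 := by nlinarith
  nlinarith [mul_le_mul_of_nonneg_right h9.le (sq_nonneg a),
    mul_nonneg (mul_nonneg hr ha) hb, sq_nonneg (a - (9/7) * b), sq_nonneg b]

private lemma aux_zim {r i A a b : ℝ} (hA : A ^ 2 = r ^ 2 + i ^ 2)
    (hr : 0 ≤ r) (ha : 0 ≤ a) (hb : 0 ≤ b) :
    (A * a) ^ 2 ≤ (r * a + b) ^ 2 + (i * a) ^ 2 := by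
  have h : (A * a) ^ 2 = (r ^ 2 + i ^ 2) * a ^ 2 := by rw [mul_pow, hA]
  nlinarith [h, mul_nonneg (mul_nonneg hr ha) hb, sq_nonneg b]

set_option maxHeartbeats 1000000 in
/-- Pointwise sectorial estimate (4.4) on the numerical range of the inverse scaled
metric matrix `𝖾_{λ,r}^{−1}`; the core of Lemma 4.1. -/
theorem stmt_11 (n : ℕ) (hn : 1 ≤ n) (α σ : ℝ) (hα : 0 < α) (hα' : α < Real.pi / 4)
    (hσ : 0 < σ) (hσ' : σ < Real.pi / 2 - 2 * α)
    (l : ℂ) (hl : ‖l‖ < Real.sin α) (t : ℝ) (ht : t ∈ Set.Icc (0:ℝ) 1)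
    (c : ℝ) (hc : 0 ≤ c) (hc' : 4 * (n + 1) ^ 2 * c ≤ Real.sin (σ / 2))
    (E M : Matrix (Fin (n + 1)) (Fin (n + 1)) ℂ)
    (hE : ∀ j k, ‖(E j k)‖ ≤ c)
    (hM : M = Matrix.diagonal
        (fun j : Fin (n + 1) => if j = 0 then ((1 + l * (t : ℂ)) ^ 2)⁻¹ else 1) + E)
    (δ φ : ℝ)
    (hδ : δ = min (1 / 4 - (n + 1) ^ 2 * c) ((12 + (n + 1) ^ 2 * c)⁻¹))
    (hφ : φ = 2 * α + σ) :
    0 < δ ∧ φ < Real.pi / 2 ∧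
    ∀ ξ : Fin (n + 1) → ℂ,
      δ * (∑ j, ‖ξ j‖ ^ 2) ≤
        ‖(∑ j, ∑ k, (starRingEnd ℂ) (ξ j) * M j k * ξ k)‖ ∧
      ‖(∑ j, ∑ k, (starRingEnd ℂ) (ξ j) * M j k * ξ k)‖ ≤
        δ⁻¹ * (∑ j, ‖ξ j‖ ^ 2) ∧
      (ξ ≠ 0 → |(∑ j, ∑ k, (starRingEnd ℂ) (ξ j) * M j k * ξ k).arg| ≤ φ) := by
  obtain ⟨ht0, ht1⟩ := ht
  have hπ := Real.pi_pos
  have hα2 : 2 * α < Real.pi / 2 := by linarith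
  have hφ2 : φ < Real.pi / 2 := by rw [hφ]; linarith
  have hφ0 : 0 < φ := by rw [hφ]; linarith
  have hsα0 : 0 < Real.sin α := Real.sin_pos_of_pos_of_lt_pi hα (by linarith)
  have hsαlt : Real.sin α < Real.sqrt 2 / 2 := by
    have h1 : Real.sin α < Real.sin (Real.pi / 4) :=
      Real.strictMonoOn_sin ⟨by linarith, by linarith⟩ ⟨by linarith, by linarith⟩ hα'
    rwa [Real.sin_pi_div_four] at h1
  have hrt2 : (Real.sqrt 2) ^ 2 = 2 := Real.sq_sqrt (by norm_num)
  have hrt2' : Real.sqrt 2 < 1.415 := aux_rt2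
  set k := Real.sin (σ / 2) with hkdef
  set ch := Real.cos (σ / 2) with hchdef
  have hk0 : 0 < k := Real.sin_pos_of_pos_of_lt_pi (by linarith) (by linarith)
  have hch0 : 0 < ch := Real.cos_pos_of_mem_Ioo ⟨by linarith, by linarith⟩
  have hkch : k ^ 2 + ch ^ 2 = 1 := Real.sin_sq_add_cos_sq _
  have hk1 : k < 1 := aux_lt1 hkch hch0 hk0.le
  set c2 := Real.cos (2 * α) with hc2def
  set s2 := Real.sin (2 * α) with hs2def
  have hc20 : 0 < c2 := Real.cos_pos_of_mem_Ioo ⟨by linarith, hα2⟩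
  have hc21 : c2 ≤ 1 := Real.cos_le_one _
  have hs20 : 0 ≤ s2 := Real.sin_nonneg_of_nonneg_of_le_pi (by linarith) (by linarith)
  have hc2s2 : s2 ^ 2 + c2 ^ 2 = 1 := Real.sin_sq_add_cos_sq _
  have hc2eq : c2 = 1 - 2 * Real.sin α ^ 2 := by
    rw [hc2def, Real.cos_two_mul]
    linarith only [Real.sin_sq_add_cos_sq α]
  set x : ℝ := ((n : ℝ) + 1) ^ 2 * c with hx
  have hx0 : 0 ≤ x := by positivity
  have hx4 : 4 * x ≤ k := by rw [hx]; linarith only [hc']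
  have hx14 : x < 1 / 4 := by linarith only [hx4, hk1, hx0]
  have hδ0 : 0 < δ := by
    rw [hδ]
    refine lt_min (by linarith only [hx14]) (by positivity)
  have hδle1 : δ ≤ 1 / 4 - x := by rw [hδ]; exact min_le_left _ _
  have hδle2 : δ ≤ (12 + x)⁻¹ := by rw [hδ]; exact min_le_right _ _
  have h12x : (0:ℝ) < 12 + x := by linarith
  have hδinv : 12 + x ≤ δ⁻¹ := by
    have h1 : δ * (12 + x) ≤ 1 := by
      calc δ * (12 + x) ≤ (12 + x)⁻¹ * (12 + x) := mul_le_mul_of_nonneg_right hδle2 h12x.le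
        _ = 1 := inv_mul_cancel₀ h12x.ne'
    calc 12 + x = δ⁻¹ * (δ * (12 + x)) := by field_simp
      _ ≤ δ⁻¹ * 1 := mul_le_mul_of_nonneg_left h1 (by positivity)
      _ = δ⁻¹ := mul_one _
  -- the scalar w and its sector bounds
  set z₀ : ℂ := 1 + l * (t : ℂ) with hz₀
  have hz₀sub : z₀ - 1 = l * (t : ℂ) := by rw [hz₀]; ring
  have hz₀1 : ‖(z₀ - 1)‖ ≤ Real.sin α := by
    rw [hz₀sub, norm_mul, Complex.norm_real, Real.norm_eq_abs, _root_.abs_of_nonneg ht0]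
    calc ‖l‖ * t ≤ ‖l‖ * 1 :=
          mul_le_mul_of_nonneg_left ht1 (norm_nonneg l)
      _ ≤ Real.sin α := by rw [mul_one]; exact hl.le
  set N := Complex.normSq z₀ with hN
  have hcon0 : (z₀.re - 1) ^ 2 + z₀.im ^ 2 ≤ Real.sin α ^ 2 := by
    have h1 : Complex.normSq (z₀ - 1) ≤ Real.sin α ^ 2 := by
      rw [← Complex.sq_norm]
      exact pow_le_pow_left₀ (norm_nonneg _) hz₀1 2
    have h2 : Complex.normSq (z₀ - 1) = (z₀.re - 1) ^ 2 + z₀.im ^ 2 := by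
      simp only [Complex.normSq_apply, Complex.sub_re, Complex.sub_im, Complex.one_re,
        Complex.one_im]
      ring
    linarith [h2 ▸ h1]
  have hsα708 : Real.sin α < 0.708 := by linarith only [hsαlt, hrt2']
  have hsα2 : Real.sin α ^ 2 < 1 / 2 := aux_sahalf hsα0 hsαlt hrt2
  have hre1 : z₀.re - 1 ≤ Real.sin α :=
    sqle hsα0.le (by linarith only [hcon0, sq_nonneg z₀.im])
  have hre2 : 1 - Real.sin α ≤ z₀.re := by
    have := sqle hsα0.le (show (1 - z₀.re) ^ 2 ≤ Real.sin α ^ 2 by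
      linarith only [hcon0, sq_nonneg z₀.im, sq_nonneg (z₀.re - 1), sq_nonneg (1 - z₀.re)])
    linarith only [this]
  have hNapp : N = z₀.re ^ 2 + z₀.im ^ 2 := by
    rw [hN, Complex.normSq_apply]; ring
  have hNub : N < 3 := by rw [hNapp]; exact aux_Nub hcon0 hre1 hsα708 hsα0
  have hNlb : 1 / 12 < N := by rw [hNapp]; exact aux_Nlb hre2 hsα708 hsα0
  have hN0 : 0 < N := by linarith only [hNlb]
  set w : ℂ := (z₀ ^ 2)⁻¹ with hw
  have habsw : ‖w‖ = N⁻¹ := by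
    rw [hw, norm_inv, norm_pow, Complex.sq_norm, ← hN]
  have habsw0 : 0 < ‖w‖ := by rw [habsw]; positivity
  have hwre : c2 * ‖w‖ ≤ w.re := by
    have h1 : (z₀ ^ 2).re = z₀.re ^ 2 - z₀.im ^ 2 := by
      rw [pow_two, Complex.mul_re]; ring
    have h2 : c2 * N ≤ (z₀ ^ 2).re := by
      rw [h1, hc2eq, hNapp]
      exact aux_sector hcon0 hsα2
    have h3 : w.re = (z₀ ^ 2).re / N ^ 2 := by
      rw [hw, Complex.inv_re, map_pow, ← hN]
    have h4 : c2 * N / N ^ 2 ≤ (z₀ ^ 2).re / N ^ 2 := by gcongr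
    have h5 : c2 * N / N ^ 2 = c2 * N⁻¹ := by field_simp
    rw [h3, habsw]
    linarith only [h5 ▸ h4]
  have hwre0 : 0 ≤ w.re := le_trans (by positivity) hwre
  have habswlb : 1 / 3 < ‖w‖ := by
    rw [habsw, inv_eq_one_div]
    exact one_div_lt_one_div_of_lt hN0 hNub
  have habswub : ‖w‖ ≤ 12 := by
    rw [habsw, inv_eq_one_div]
    calc 1 / N ≤ 1 / (1 / 12) := one_div_le_one_div_of_le (by norm_num) hNlb.le
      _ = 12 := by norm_num
  have habw2 : ‖w‖ ^ 2 = w.re ^ 2 + w.im ^ 2 := by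
    rw [Complex.sq_norm, Complex.normSq_apply]; ring
  have hwim : |w.im| ≤ s2 * ‖w‖ := by
    refine sqle (by positivity) ?_
    rw [_root_.sq_abs]
    exact aux_wim hwre hc20.le (norm_nonneg w) habw2 hc2s2
  refine ⟨hδ0, hφ2, fun ξ => ?_⟩
  set s : ℝ := ∑ j, ‖ξ j‖ ^ 2 with hs
  have hs0 : 0 ≤ s := Finset.sum_nonneg fun j _ => sq_nonneg _
  set a : ℝ := ‖ξ 0‖ ^ 2 with ha
  have ha0 : 0 ≤ a := sq_nonneg _
  have has : a ≤ s := by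
    rw [hs, ha]
    exact Finset.single_le_sum (f := fun j => ‖ξ j‖ ^ 2) (fun j _ => sq_nonneg _)
      (Finset.mem_univ 0)
  have hb0 : 0 ≤ s - a := by linarith only [has]
  set ε : ℂ := ∑ j, ∑ k, (starRingEnd ℂ) (ξ j) * E j k * ξ k with hεd
  set Q : ℂ := ∑ j, ∑ k, (starRingEnd ℂ) (ξ j) * M j k * ξ k with hQd
  have hQ : Q = w * ((a : ℝ) : ℂ) + (((s - a : ℝ)) : ℂ) + ε := by
    have hdiag : ∀ j : Fin (n + 1), (∑ m : Fin (n+1), (starRingEnd ℂ) (ξ j) *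
        (Matrix.diagonal (fun i : Fin (n + 1) => if i = 0 then w else 1)) j m * ξ m)
        = (if j = 0 then w else 1) * ((‖ξ j‖ ^ 2 : ℝ) : ℂ) := by
      intro j
      rw [Finset.sum_eq_single j]
      · rw [Matrix.diagonal_apply_eq]
        have hcj : (starRingEnd ℂ) (ξ j) * ξ j = ((‖ξ j‖ ^ 2 : ℝ) : ℂ) := by
          rw [mul_comm, Complex.mul_conj]
          norm_cast
          rw [Complex.normSq_eq_norm_sq]
        calc (starRingEnd ℂ) (ξ j) * (if j = 0 then w else 1) * ξ j
            = (if j = 0 then w else 1) * ((starRingEnd ℂ) (ξ j) * ξ j) := by ring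
          _ = _ := by rw [hcj]
      · intro m _ hm
        rw [Matrix.diagonal_apply_ne _ (Ne.symm hm), mul_zero, zero_mul]
      · intro hj; exact absurd (Finset.mem_univ j) hj
    calc Q = (∑ j, ∑ m : Fin (n+1), (starRingEnd ℂ) (ξ j) *
          (Matrix.diagonal (fun i : Fin (n + 1) => if i = 0 then w else 1)) j m * ξ m) + ε := by
          rw [hQd, hεd, hM, ← Finset.sum_add_distrib]
          refine Finset.sum_congr rfl fun j _ => ?_
          rw [← Finset.sum_add_distrib]
          refine Finset.sum_congr rfl fun m _ => ?_
          rw [Matrix.add_apply]; ring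
      _ = (∑ j, (if j = 0 then w else 1) * ((‖ξ j‖ ^ 2 : ℝ) : ℂ)) + ε := by
          rw [Finset.sum_congr rfl fun j _ => hdiag j]
      _ = w * ((a : ℝ) : ℂ) + (((s - a : ℝ)) : ℂ) + ε := by
          congr 1
          have h2 : ∀ j : Fin (n + 1), (if j = 0 then w else 1) * ((‖ξ j‖ ^ 2 : ℝ) : ℂ)
              = ((‖ξ j‖ ^ 2 : ℝ) : ℂ) + (if j = 0 then (w - 1) * ((a : ℝ) : ℂ) else 0) := by
            intro j
            by_cases hj : j = 0
            · subst hj; rw [if_pos rfl, if_pos rfl, ha]; push_cast; ring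
            · rw [if_neg hj, if_neg hj]; ring
          rw [Finset.sum_congr rfl fun j _ => h2 j, Finset.sum_add_distrib,
            Finset.sum_ite_eq' Finset.univ (0 : Fin (n + 1))
              (fun _ => (w - 1) * ((a : ℝ) : ℂ)), if_pos (Finset.mem_univ _)]
          have h3 : (∑ j, ((‖ξ j‖ ^ 2 : ℝ) : ℂ)) = ((s : ℝ) : ℂ) := by
            rw [hs]; push_cast; rfl
          rw [h3]; push_cast; ring
  have hεb : ‖ε‖ ≤ x * s := by
    have h1 : ‖ε‖ ≤ ∑ j, ∑ m : Fin (n+1), ‖ξ j‖ * c * ‖ξ m‖ := by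
      rw [hεd]
      refine (norm_sum_le _ _).trans (Finset.sum_le_sum fun j _ => ?_)
      refine (norm_sum_le _ _).trans (Finset.sum_le_sum fun m _ => ?_)
      rw [norm_mul, norm_mul, Complex.norm_conj]
      gcongr
      exact hE j m
    have h2 : (∑ j, ∑ m : Fin (n+1), ‖ξ j‖ * c * ‖ξ m‖) = c * (∑ j, ‖ξ j‖) ^ 2 := by
      rw [sq, Finset.sum_mul_sum, Finset.mul_sum]
      refine Finset.sum_congr rfl fun j _ => ?_
      rw [Finset.mul_sum]
      refine Finset.sum_congr rfl fun m _ => ?_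
      ring
    have h3 : (∑ j, ‖ξ j‖) ^ 2 ≤ ((n : ℝ) + 1) * s := by
      have h4 := sq_sum_le_card_mul_sum_sq (s := (Finset.univ : Finset (Fin (n + 1))))
        (f := fun j => ‖ξ j‖)
      rw [hs]
      simpa [Finset.card_univ] using h4
    have h5 : c * (∑ j, ‖ξ j‖) ^ 2 ≤ c * (((n : ℝ) + 1) * s) := mul_le_mul_of_nonneg_left h3 hc
    have h6 : c * (((n : ℝ) + 1) * s) ≤ x * s := by
      rw [hx]
      refine aux_eps ?_ hc hs0
      have : (0:ℝ) ≤ (n:ℝ) := Nat.cast_nonneg n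
      linarith only [this]
    linarith only [h1.trans_eq h2, h5, h6]
  set zz : ℂ := w * ((a : ℝ) : ℂ) + (((s - a : ℝ)) : ℂ) with hzz
  have hzzre : zz.re = w.re * a + (s - a) := by
    simp [hzz, Complex.add_re, Complex.mul_re, Complex.ofReal_re, Complex.ofReal_im]
  have hzzim : zz.im = w.im * a := by
    simp [hzz, Complex.add_im, Complex.mul_im, Complex.ofReal_re, Complex.ofReal_im]
  have habszz : ‖zz‖ ^ 2 = (w.re * a + (s - a)) ^ 2 + (w.im * a) ^ 2 := by
    rw [Complex.sq_norm, Complex.normSq_apply, hzzre, hzzim]; ring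
  have hzlb : s / 4 ≤ ‖zz‖ := by
    refine sqle (norm_nonneg _) ?_
    rw [habszz]
    have := aux_zlb habw2 habswlb hwre0 ha0 hb0
    calc (s / 4) ^ 2 = ((a + (s - a)) / 4) ^ 2 := by ring_nf
      _ ≤ _ := this
  have hzub' : ‖zz‖ ≤ ‖w‖ * a + (s - a) := by
    calc ‖zz‖ ≤ ‖(w * ((a : ℝ) : ℂ))‖ + ‖(((s - a : ℝ)) : ℂ)‖ := by
          rw [hzz]; exact norm_add_le _ _
      _ = ‖w‖ * a + (s - a) := by
          rw [norm_mul, Complex.norm_real, Complex.norm_real, Real.norm_eq_abs, Real.norm_eq_abs, _root_.abs_of_nonneg ha0,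
            _root_.abs_of_nonneg hb0]
  have hzub : ‖zz‖ ≤ 12 * s := by
    calc ‖zz‖ ≤ ‖w‖ * a + (s - a) := hzub'
      _ ≤ 12 * a + (s - a) := by
          have := mul_le_mul_of_nonneg_right habswub ha0
          linarith only [this]
      _ ≤ 12 * s := by linarith
  have hQzz : Q - zz = ε := by rw [hQ, hzz]; ring
  have hQlb : δ * s ≤ ‖Q‖ := by
    have h1 : ‖zz‖ ≤ ‖Q‖ + ‖ε‖ := by
      calc ‖zz‖ = ‖(Q + -ε)‖ := by rw [show Q + -ε = zz by rw [hQ]; ring]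
        _ ≤ ‖Q‖ + ‖(-ε)‖ := norm_add_le _ _
        _ = ‖Q‖ + ‖ε‖ := by rw [norm_neg]
    have h2 : δ * s ≤ (1 / 4 - x) * s := mul_le_mul_of_nonneg_right hδle1 hs0
    linarith only [hzlb, hεb, h1, h2]
  have hQub : ‖Q‖ ≤ δ⁻¹ * s := by
    have h1 : ‖Q‖ ≤ ‖zz‖ + ‖ε‖ := by
      calc ‖Q‖ = ‖(zz + ε)‖ := by rw [show zz + ε = Q by rw [hQ]]
        _ ≤ ‖zz‖ + ‖ε‖ := norm_add_le _ _
    have h2 : (12 + x) * s ≤ δ⁻¹ * s := mul_le_mul_of_nonneg_right hδinv hs0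
    linarith only [hzub, hεb, h1, h2]
  refine ⟨hQlb, hQub, fun hξ => ?_⟩
  have hspos : 0 < s := by
    obtain ⟨j, hj⟩ := Function.ne_iff.mp hξ
    rw [hs]
    refine Finset.sum_pos' (fun i _ => sq_nonneg _) ⟨j, Finset.mem_univ j, ?_⟩
    exact pow_pos (norm_pos_iff.mpr hj) 2
  have hzpos : 0 < ‖zz‖ := lt_of_lt_of_le (by linarith only [hspos]) hzlb
  have hεz : ‖(Q - zz)‖ ≤ k * ‖zz‖ := by
    rw [hQzz]
    calc ‖ε‖ ≤ x * s := hεb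
      _ ≤ (k / 4) * s := mul_le_mul_of_nonneg_right (by linarith only [hx4]) hs0
      _ = k * (s / 4) := by ring
      _ ≤ k * ‖zz‖ := mul_le_mul_of_nonneg_left hzlb hk0.le
  obtain ⟨hIm, hRe⟩ := disk_bounds Q zz k ch hk0.le hch0.le hkch hεz
  have hzre : c2 * ‖zz‖ ≤ zz.re := by
    rw [hzzre]
    have h1 := mul_le_mul_of_nonneg_left hzub' hc20.le
    have h2 := mul_le_mul_of_nonneg_right hwre ha0
    have h3 : c2 * (s - a) ≤ 1 * (s - a) := mul_le_mul_of_nonneg_right hc21 hb0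
    linarith only [h1, h2, h3]
  have hzim : |zz.im| ≤ s2 * ‖zz‖ := by
    rw [hzzim]
    have h1 : ‖w‖ * a ≤ ‖zz‖ := by
      refine sqle (norm_nonneg _) ?_
      rw [habszz]
      exact aux_zim habw2 hwre0 ha0 hb0
    rw [abs_mul, _root_.abs_of_nonneg ha0]
    calc |w.im| * a ≤ (s2 * ‖w‖) * a := mul_le_mul_of_nonneg_right hwim ha0
      _ = s2 * (‖w‖ * a) := by ring
      _ ≤ s2 * ‖zz‖ := mul_le_mul_of_nonneg_left h1 hs20
  have hid : Q.re * Complex.normSq zz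
      = (Q * (starRingEnd ℂ) zz).re * zz.re - (Q * (starRingEnd ℂ) zz).im * zz.im := by
    simp only [Complex.normSq_apply, Complex.mul_re, Complex.mul_im, Complex.conj_re,
      Complex.conj_im]
    ring
  have hNzz : Complex.normSq zz = ‖zz‖ ^ 2 := (Complex.sq_norm zz).symm
  have hcosadd : Real.cos (2 * α + σ / 2) = c2 * ch - s2 * k := by
    rw [Real.cos_add, hc2def, hs2def, hkdef, hchdef]
  have hQre : Real.cos φ * ‖Q‖ ≤ Q.re := by
    have hRe0 : 0 ≤ (Q * (starRingEnd ℂ) zz).re :=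
      le_trans (by positivity) hRe
    have h1 : (ch * (‖Q‖ * ‖zz‖)) * (c2 * ‖zz‖)
        ≤ (Q * (starRingEnd ℂ) zz).re * zz.re :=
      mul_le_mul hRe hzre (by positivity) hRe0
    have h2 : (Q * (starRingEnd ℂ) zz).im * zz.im
        ≤ (k * (‖Q‖ * ‖zz‖)) * (s2 * ‖zz‖) := by
      calc (Q * (starRingEnd ℂ) zz).im * zz.im ≤ |(Q * (starRingEnd ℂ) zz).im * zz.im| :=
            le_abs_self _
        _ = |(Q * (starRingEnd ℂ) zz).im| * |zz.im| := abs_mul _ _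
        _ ≤ (k * (‖Q‖ * ‖zz‖)) * (s2 * ‖zz‖) :=
            mul_le_mul hIm hzim (abs_nonneg _) (by positivity)
    have h3 : (c2 * ch - s2 * k) * ‖Q‖ * ‖zz‖ ^ 2
        ≤ Q.re * ‖zz‖ ^ 2 := by
      rw [hNzz] at hid
      rw [hid]
      exact aux_combine h1 h2
    have h4 : Real.cos φ ≤ Real.cos (2 * α + σ / 2) := by
      refine Real.cos_le_cos_of_nonneg_of_le_pi (by linarith) (by rw [hφ]; linarith) ?_
      rw [hφ]; linarith
    rw [hcosadd] at h4
    have h5 : 0 < ‖zz‖ ^ 2 := by positivity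
    have h6 : Real.cos φ * ‖Q‖ * ‖zz‖ ^ 2
        ≤ Q.re * ‖zz‖ ^ 2 := by
      refine le_trans ?_ h3
      have := mul_le_mul_of_nonneg_right (mul_le_mul_of_nonneg_right h4 (norm_nonneg Q)) h5.le
      linarith only [this]
    have := le_of_mul_le_mul_right (by linarith only [h6] :
      (Real.cos φ * ‖Q‖) * ‖zz‖ ^ 2 ≤ Q.re * ‖zz‖ ^ 2) h5
    linarith only [this]
  have hQ0 : Q ≠ 0 := by
    intro h0
    rw [h0, norm_zero] at hQlb
    linarith only [hQlb, mul_pos hδ0 hspos]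
  have hcosφpos : 0 < Real.cos φ := Real.cos_pos_of_mem_Ioo ⟨by linarith, hφ2⟩
  have hQabs : 0 < ‖Q‖ := norm_pos_iff.mpr hQ0
  have harg : Real.cos φ ≤ Real.cos Q.arg := by
    rw [Complex.cos_arg hQ0, le_div_iff₀ hQabs]
    exact hQre
  by_contra hconr
  push_neg at hconr
  have h6 : Real.cos |Q.arg| < Real.cos φ :=
    Real.strictAntiOn_cos ⟨by linarith, by linarith⟩
      ⟨abs_nonneg _, Complex.abs_arg_le_pi Q⟩ hconr
  rw [Real.cos_abs] at h6
  linarith only [h6, harg]
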